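/- Let g(z) = Σ_{j=1}^t e^{a_j z + b_j} be a univariate exponential sum with real frequencies a_1 < a_2 < ... < a_t and complex coefficients b_j. Let w ∈ ℝ and ℓ ∈ {2,...,t} be such that a_ℓ w + Re(b_ℓ) ≥ a_j w + Re(b_j) for all j ∈ [ℓ], and let δ_ℓ := min_{p≠q, p,q∈[ℓ]} |a_p − a_q|. Then for any N ∈ ℕ with N ≥ 1 and any z ∈ ℂ with Re(z) ≥ w + log(N+1)/δ_ℓ, we have |Σ_{j=1}^{ℓ−1} e^{a_j z + b_j}| < (1/N)|e^{a_ℓ z + b_ℓ}|. -/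

import Mathlib

noncomputable section

/-- domination of the low-order terms of a univariate exponential
sum to the right of a point `w` where the `ℓ`-th term dominates the first `ℓ` terms. -/
theorem lowOrderTerms_lt (t : ℕ) (a : Fin t → ℝ) (b : Fin t → ℂ) (ha : StrictMono a)
    (ℓ : Fin t) (hℓ : 0 < (ℓ : ℕ)) (w : ℝ)
    (hw : ∀ j : Fin t, j ≤ ℓ → a j * w + (b j).re ≤ a ℓ * w + (b ℓ).re)
    (δ : ℝ)
    (hδ : IsLeast {d : ℝ | ∃ p q : Fin t, p ≤ ℓ ∧ q ≤ ℓ ∧ p ≠ q ∧ d = |a p - a q|} δ)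
    (N : ℕ) (hN : 1 ≤ N) (z : ℂ) (hz : w + Real.log (N + 1) / δ ≤ z.re) :
    ‖∑ j ∈ Finset.Iio ℓ, Complex.exp (a j * z + b j)‖
      < (1 / N) * ‖Complex.exp (a ℓ * z + b ℓ)‖ := by
  -- δ is positive
  obtain ⟨⟨p₀, q₀, hp₀, hq₀, hpq₀, hd₀⟩, hlb⟩ := hδ
  have hδpos : 0 < δ := by
    rw [hd₀]
    exact abs_pos.mpr (sub_ne_zero.mpr (fun h => hpq₀ (ha.injective h)))
  have hNpos : (0 : ℝ) < N := by exact_mod_cast hN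
  have hN1 : (1 : ℝ) < (N : ℝ) + 1 := by linarith
  have hlog : 0 < Real.log (N + 1) := Real.log_pos hN1
  -- gap lemma: a p - a q ≥ δ * k when p = q + k
  have gap : ∀ k : ℕ, ∀ q p : Fin t, q ≤ ℓ → p ≤ ℓ → (p : ℕ) = (q : ℕ) + k →
      δ * k ≤ a p - a q := by
    intro k
    induction k with
    | zero =>
      intro q p _ _ hpq
      have : p = q := Fin.ext (by omega)
      simp [this]
    | succ k ih =>
      intro q p hq hp hpq
      have hqk : (q : ℕ) + k < t := by
        have := p.isLt; omega
      set p' : Fin t := ⟨(q : ℕ) + k, hqk⟩ with hp'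
      have hp'ℓ : p' ≤ ℓ := by
        have : (p' : ℕ) ≤ (ℓ : ℕ) := by
          have := (Fin.le_def.mp hp); simp [hp']; omega
        exact Fin.le_def.mpr this
      have h1 : δ * k ≤ a p' - a q := ih q p' hq hp'ℓ rfl
      have hlt : p' < p := Fin.lt_def.mpr (by simp [hp']; omega)
      have h2 : δ ≤ a p - a p' := by
        have hmem : |a p - a p'| ∈ {d : ℝ | ∃ p q : Fin t, p ≤ ℓ ∧ q ≤ ℓ ∧ p ≠ q ∧ d = |a p - a q|} :=
          ⟨p, p', hp, hp'ℓ, (ne_of_lt hlt).symm, rfl⟩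
        have := hlb hmem
        rwa [abs_of_pos (sub_pos.mpr (ha hlt))] at this
      push_cast
      linarith
  set x : ℝ := 1 / ((N : ℝ) + 1) with hx
  have hx0 : 0 < x := by positivity
  have hx1 : x < 1 := by
    rw [hx, div_lt_one (by linarith)]; linarith
  set E : ℝ := Real.exp (a ℓ * z.re + (b ℓ).re) with hE
  have hEabs : ‖Complex.exp (↑(a ℓ) * z + b ℓ)‖ = E := by
    rw [Complex.norm_exp]
    congr 1
    simp [Complex.add_re, Complex.re_ofReal_mul]
  have hEpos : 0 < E := Real.exp_pos _
  -- term bound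
  have term_bound : ∀ j ∈ Finset.Iio ℓ,
      ‖Complex.exp (↑(a j) * z + b j)‖ ≤ x ^ ((ℓ : ℕ) - (j : ℕ)) * E := by
    intro j hj
    rw [Finset.mem_Iio] at hj
    have hjℓ : j ≤ ℓ := le_of_lt hj
    set k : ℕ := (ℓ : ℕ) - (j : ℕ) with hk
    have hkℓ : (ℓ : ℕ) = (j : ℕ) + k := by
      have := Fin.lt_def.mp hj; omega
    have hgap : δ * k ≤ a ℓ - a j := gap k j ℓ hjℓ le_rfl hkℓ
    have hkpos : 0 < k := by have := Fin.lt_def.mp hj; omega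
    rw [Complex.norm_exp]
    have hre : (↑(a j) * z + b j).re = a j * z.re + (b j).re := by
      simp [Complex.add_re, Complex.re_ofReal_mul]
    rw [hre]
    have hxpow : x ^ k = Real.exp (-(k * Real.log (N + 1))) := by
      rw [Real.exp_neg, Real.exp_nat_mul, Real.exp_log (show (0:ℝ) < (N:ℝ)+1 by linarith),
        hx, one_div, inv_pow]
    rw [hxpow, hE, ← Real.exp_add]
    apply Real.exp_le_exp.mpr
    -- need: a j * z.re + (b j).re ≤ -(k * log(N+1)) + (a ℓ * z.re + (b ℓ).re)
    have hb : (b j).re - (b ℓ).re ≤ (a ℓ - a j) * w := by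
      have := hw j hjℓ; nlinarith
    have haj : a j < a ℓ := ha hj
    have hzw : Real.log (N + 1) / δ ≤ z.re - w := by linarith
    have h1 : (a j - a ℓ) * (z.re - w) ≤ (a j - a ℓ) * (Real.log (N + 1) / δ) := by
      apply mul_le_mul_of_nonpos_left hzw (by linarith)
    have h2 : (a j - a ℓ) * (Real.log (N + 1) / δ) ≤ -(δ * k) * (Real.log (N + 1) / δ) := by
      apply mul_le_mul_of_nonneg_right (by linarith) (by positivity)
    have h3 : -(δ * k) * (Real.log (N + 1) / δ) = -(k * Real.log (N + 1)) := by
      field_simp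
    nlinarith [h1, h2]
  -- sum of the geometric bounds
  have sum_bound : ∑ j ∈ Finset.Iio ℓ, x ^ ((ℓ : ℕ) - (j : ℕ)) < 1 / N := by
    have hre : ∑ j ∈ Finset.Iio ℓ, x ^ ((ℓ : ℕ) - (j : ℕ))
        = ∑ k ∈ Finset.range (ℓ : ℕ), x ^ ((ℓ : ℕ) - k) := by
      refine Finset.sum_nbij' (fun j => (j : ℕ))
        (fun k => (⟨k % t, Nat.mod_lt _ ℓ.pos⟩ : Fin t)) ?_ ?_ ?_ ?_ ?_
      · intro j hj
        rw [Finset.mem_Iio] at hj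
        exact Finset.mem_range.mpr (Fin.lt_def.mp hj)
      · intro k hk
        rw [Finset.mem_range] at hk
        rw [Finset.mem_Iio, Fin.lt_def]
        have hkt : k < t := lt_trans hk ℓ.isLt
        simp [Nat.mod_eq_of_lt hkt]
        omega
      · intro j _; exact Fin.ext (by simp [Nat.mod_eq_of_lt j.isLt])
      · intro k hk
        rw [Finset.mem_range] at hk
        have hkt : k < t := lt_trans hk ℓ.isLt
        simp [Nat.mod_eq_of_lt hkt]
      · intro k _
        rfl
    rw [hre]
    have hrefl : ∑ k ∈ Finset.range (ℓ : ℕ), x ^ ((ℓ : ℕ) - k)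
        = ∑ k ∈ Finset.range (ℓ : ℕ), x ^ (k + 1) := by
      rw [← Finset.sum_range_reflect]
      apply Finset.sum_congr rfl
      intro k hk
      rw [Finset.mem_range] at hk
      congr 1
      omega
    rw [hrefl]
    have hgeom : ∑ k ∈ Finset.range (ℓ : ℕ), x ^ (k + 1)
        = x * ∑ k ∈ Finset.range (ℓ : ℕ), x ^ k := by
      rw [Finset.mul_sum]
      apply Finset.sum_congr rfl
      intro k _; ring
    rw [hgeom]
    have hgs : ∑ k ∈ Finset.range (ℓ : ℕ), x ^ k < (1 - x)⁻¹ := by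
      have hxne : x ≠ 1 := ne_of_lt hx1
      have h1x : 0 < 1 - x := by linarith
      have hswap : (x ^ (ℓ : ℕ) - 1) / (x - 1) = (1 - x ^ (ℓ : ℕ)) / (1 - x) := by
        rw [div_eq_div_iff (by linarith : x - 1 ≠ 0) (by linarith : (1:ℝ) - x ≠ 0)]
        ring
      rw [geom_sum_eq hxne, hswap, inv_eq_one_div, div_lt_div_iff₀ h1x h1x]
      nlinarith [pow_pos hx0 ((ℓ : ℕ))]
    have hxlt : x * (1 - x)⁻¹ = 1 / N := by
      rw [hx]
      field_simp
      rw [add_sub_cancel_right, div_self hNpos.ne']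
    calc x * ∑ k ∈ Finset.range (ℓ : ℕ), x ^ k < x * (1 - x)⁻¹ :=
          (mul_lt_mul_iff_right₀ hx0).mpr hgs
      _ = 1 / N := hxlt
  calc ‖∑ j ∈ Finset.Iio ℓ, Complex.exp (↑(a j) * z + b j)‖
      ≤ ∑ j ∈ Finset.Iio ℓ, ‖Complex.exp (↑(a j) * z + b j)‖ :=
        norm_sum_le _ _
    _ ≤ ∑ j ∈ Finset.Iio ℓ, x ^ ((ℓ : ℕ) - (j : ℕ)) * E :=
        Finset.sum_le_sum term_bound
    _ = (∑ j ∈ Finset.Iio ℓ, x ^ ((ℓ : ℕ) - (j : ℕ))) * E := by rw [← Finset.sum_mul]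
    _ < (1 / N) * E := (mul_lt_mul_iff_left₀ hEpos).mpr sum_bound
    _ = (1 / N) * ‖Complex.exp (↑(a ℓ) * z + b ℓ)‖ := by rw [hEabs]
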